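/- Let P be a finite poset with bottom, f: P → P' surjective satisfying the coarsening conditions, Q and Q' the lattices of nonempty down-sets of P and P' ordered by inclusion, and g the elementwise action of f. For nonempty down-sets A', B' of P', B' ⊆ A' if and only if there exist nonempty down-sets B ∈ g⁻¹(B'), A ∈ g⁻¹(A') of P with B ⊆ A. -/

import Mathlib

/-- For nonempty down-sets `A'`, `B'` of `P'`, inclusion `B' ⊆ A'` holds
iff there exist nonempty down-sets `B`, `A` of `P` with `f '' B = B'`, `f '' A = A'`
and `B ⊆ A`; i.e., the relation on down-sets induced by the elementwise image map
coincides with inclusion. -/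
theorem induced_relation_on_downsets_is_inclusion
    {P P' : Type*} [Fintype P] [PartialOrder P] [OrderBot P]
    (f : P → P') (hf : Function.Surjective f)
    (r' : P' → P' → Prop)
    (hr' : ∀ b' a' : P', r' b' a' ↔ ∃ a b : P, f a = a' ∧ f b = b' ∧ b ≤ a)
    (hdens : ∀ b' a' : P', r' b' a' → ∀ a : P, f a = a' → ∃ b : P, f b = b' ∧ b ≤ a)
    (hsol : ∀ a b c : P, c ≤ b → b ≤ a → f c = f a → f b = f a)
    (A' B' : Set P')
    (hA'ne : A'.Nonempty) (hA'down : ∀ a' ∈ A', ∀ b' : P', r' b' a' → b' ∈ A')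
    (hB'ne : B'.Nonempty) (hB'down : ∀ a' ∈ B', ∀ b' : P', r' b' a' → b' ∈ B') :
    B' ⊆ A' ↔
      ∃ B A : Set P, B.Nonempty ∧ IsLowerSet B ∧ f '' B = B' ∧
        A.Nonempty ∧ IsLowerSet A ∧ f '' A = A' ∧ B ⊆ A := by
  constructor
  · intro hsub
    refine ⟨f ⁻¹' B', f ⁻¹' A', ?_, ?_, Set.image_preimage_eq _ hf, ?_, ?_,
      Set.image_preimage_eq _ hf, fun x hx => hsub hx⟩
    · obtain ⟨b', hb'⟩ := hB'ne
      obtain ⟨b, rfl⟩ := hf b'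
      exact ⟨b, hb'⟩
    · intro a b hba ha
      exact hB'down _ ha _ ((hr' _ _).2 ⟨a, b, rfl, rfl, hba⟩)
    · obtain ⟨a', ha'⟩ := hA'ne
      obtain ⟨a, rfl⟩ := hf a'
      exact ⟨a, ha'⟩
    · intro a b hba ha
      exact hA'down _ ha _ ((hr' _ _).2 ⟨a, b, rfl, rfl, hba⟩)
  · rintro ⟨B, A, -, -, rfl, -, -, rfl, hBA⟩
    exact Set.image_mono hBA
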